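/- Let ≺ be a monomial order on k[x_0,...,x_n] and let I be a homogeneous ideal with a finite Gröbner basis G. Then there exists a weight vector ω ∈ Z_{≥0}^{n+1} such that for every g ∈ G, the ω-initial form of g equals its ≺-initial term; and for any such ω, the corresponding one-parameter diagonal substitution λ(t).x_i = t^{-ω_i} x_i satisfies: the flat limit as t → 0 of λ(t).I equals the initial ideal in_≺(I). -/

import Mathlib

lemma exists_between_finsets (S T : Finset ℚ) (h : ∀ p ∈ S, ∀ q ∈ T, p < q) :
    ∃ t : ℚ, (∀ p ∈ S, p < t) ∧ (∀ q ∈ T, t < q) := by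
  rcases S.eq_empty_or_nonempty with hS | hS
  · rcases T.eq_empty_or_nonempty with hT | hT
    · exact ⟨0, by simp [hS], by simp [hT]⟩
    · exact ⟨T.min' hT - 1, by simp [hS], fun q hq => by
        have := T.min'_le q hq; linarith⟩
  · rcases T.eq_empty_or_nonempty with hT | hT
    · exact ⟨S.max' hS + 1, fun p hp => by have := S.le_max' p hp; linarith, by simp [hT]⟩
    · refine ⟨(S.max' hS + T.min' hT) / 2, fun p hp => ?_, fun q hq => ?_⟩
      · have h1 := S.le_max' p hp
        have h2 := h (S.max' hS) (S.max'_mem hS) (T.min' hT) (T.min'_mem hT)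
        linarith
      · have h1 := T.min'_le q hq
        have h2 := h (S.max' hS) (S.max'_mem hS) (T.min' hT) (T.min'_mem hT)
        linarith

lemma nat_cast_of_den_dvd {q : ℚ} (hq : 0 ≤ q) {D : ℕ} (hD : q.den ∣ D) :
    ∃ m : ℕ, (m : ℚ) = D * q := by
  obtain ⟨e, rfl⟩ := hD
  refine ⟨e * q.num.toNat, ?_⟩
  have h1 : (q.den : ℚ) * q = q.num := by
    rw [mul_comm, ← Rat.num_div_den q, div_mul_eq_mul_div, mul_div_assoc]
    simp [Rat.num_div_den]
  have h2 : q.num.toNat = q.num := Int.toNat_of_nonneg (Rat.num_nonneg.mpr hq)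
  push_cast [h2]
  rw [show (q.den : ℚ) * (e:ℚ) * q = (e:ℚ) * ((q.den:ℚ) * q) by ring, h1]
  exact_mod_cast congrArg (fun z : ℤ => (e : ℚ) * z) h2

lemma family_scale {ι : Type} [Fintype ι] (d : ι → ℚ) (hd : ∀ j, 0 ≤ d j) :
    ∃ (D : ℕ) (c : ι → ℕ), 0 < D ∧ ∀ j, (c j : ℚ) = D * d j := by
  have hdvd : ∀ j, (d j).den ∣ ∏ j', (d j').den :=
    fun j => Finset.dvd_prod_of_mem _ (Finset.mem_univ j)
  choose c hc using fun j => nat_cast_of_den_dvd (hd j) (hdvd j)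
  exact ⟨∏ j', (d j').den, c, Finset.prod_pos (fun j _ => (d j).pos), hc⟩

lemma gordan : ∀ (N : ℕ) (ι : Type) [Fintype ι] (v : ι → Fin N → ℚ),
    (∀ c : ι → ℕ, (∀ i, ∑ j, (c j : ℚ) * v j i ≤ 0) → ∀ j, c j = 0) →
    ∃ ω : Fin N → ℚ, ∀ j, 0 < ∑ i, ω i * v j i := by
  intro N
  induction N with
  | zero =>
    intro ι _ v h
    exact ⟨0, fun j => absurd (h (fun _ => 1) (fun i => i.elim0) j) one_ne_zero⟩
  | succ N IH =>
    intro ι _ v h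
    classical
    set L : Fin (N+1) := Fin.last N with hL
    let ιZ := {j : ι // v j L = 0}
    let ιP := {j : ι // 0 < v j L}
    let ιM := {j : ι // v j L < 0}
    let ι' := ιZ ⊕ ιP × ιM
    let V : ι' → Fin (N+1) → ℚ := Sum.elim (fun z => v z.1)
      (fun pq => fun x => v pq.1.1 L * v pq.2.1 x + (- v pq.2.1 L) * v pq.1.1 x)
    have hVL : ∀ j', V j' L = 0 := by
      rintro (z | pq)
      · exact z.2
      · show v pq.1.1 L * v pq.2.1 L + (- v pq.2.1 L) * v pq.1.1 L = 0
        ring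
    let v' : ι' → Fin N → ℚ := fun j' i => V j' i.castSucc
    have key : ∀ c' : ι' → ℕ, (∀ i, ∑ j', (c' j' : ℚ) * v' j' i ≤ 0) → ∀ j', c' j' = 0 := by
      intro c' hc'
      let wgt : ι' → ι → ℚ := fun j' j =>
        Sum.elim (fun z : ιZ => if z.1 = j then 1 else 0)
          (fun pq : ιP × ιM => (if pq.1.1 = j then -v pq.2.1 L else 0)
            + (if pq.2.1 = j then v pq.1.1 L else 0)) j'
      have hwgt_nonneg : ∀ j' j, 0 ≤ wgt j' j := by
        rintro (z | pq) j
        · dsimp [wgt]; split <;> norm_num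
        · have hp := pq.1.2; have hq := pq.2.2
          dsimp [wgt]; split_ifs <;> linarith
      have hexp : ∀ (j' : ι') (x : Fin (N+1)), ∑ j, wgt j' j * v j x = V j' x := by
        rintro (z | pq) x
        · dsimp [wgt]
          simp only [ite_mul, one_mul, zero_mul]
          rw [Finset.sum_ite_eq]
          simp [V]
        · dsimp [wgt]
          simp only [add_mul, ite_mul, zero_mul, Finset.sum_add_distrib]
          rw [Finset.sum_ite_eq, Finset.sum_ite_eq]
          simp only [Finset.mem_univ, if_true]
          show -v pq.2.1 L * v pq.1.1 x + v pq.1.1 L * v pq.2.1 x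
              = v pq.1.1 L * v pq.2.1 x + (- v pq.2.1 L) * v pq.1.1 x
          ring
      let d : ι → ℚ := fun j => ∑ j', (c' j' : ℚ) * wgt j' j
      have hd0 : ∀ j, 0 ≤ d j := fun j => Finset.sum_nonneg fun j' _ =>
        mul_nonneg (Nat.cast_nonneg _) (hwgt_nonneg j' j)
      have hdv : ∀ x, ∑ j, d j * v j x = ∑ j', (c' j' : ℚ) * V j' x := by
        intro x
        calc ∑ j, (∑ j', (c' j' : ℚ) * wgt j' j) * v j x
            = ∑ j, ∑ j', (c' j' : ℚ) * (wgt j' j * v j x) := by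
              refine Finset.sum_congr rfl fun j _ => ?_
              rw [Finset.sum_mul]
              exact Finset.sum_congr rfl fun j' _ => by ring
          _ = ∑ j', ∑ j, (c' j' : ℚ) * (wgt j' j * v j x) := Finset.sum_comm
          _ = ∑ j', (c' j' : ℚ) * V j' x := by
              refine Finset.sum_congr rfl fun j' _ => ?_
              rw [← Finset.mul_sum, hexp]
      have hsum_le : ∀ x, ∑ j, d j * v j x ≤ 0 := by
        intro x
        rw [hdv x]
        rcases eq_or_ne x L with rfl | hx
        · apply le_of_eq
          refine Finset.sum_eq_zero fun j' _ => ?_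
          rw [hVL j', mul_zero]
        · obtain ⟨i, rfl⟩ := Fin.exists_castSucc_eq.mpr hx
          exact hc' i
      obtain ⟨D, c, hD, hcD⟩ := family_scale d hd0
      have hc0 : ∀ j, c j = 0 := by
        apply h
        intro i
        have heq : ∑ j, (c j : ℚ) * v j i = D * ∑ j, d j * v j i := by
          rw [Finset.mul_sum]
          exact Finset.sum_congr rfl fun j _ => by rw [hcD j]; ring
        rw [heq]
        exact mul_nonpos_of_nonneg_of_nonpos (Nat.cast_nonneg D) (hsum_le i)
      have hdzero : ∀ j, d j = 0 := by
        intro j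
        have h1 := hcD j
        rw [hc0 j] at h1
        have hD' : (D:ℚ) ≠ 0 := by exact_mod_cast hD.ne'
        have := h1.symm
        rcases mul_eq_zero.mp this with h2 | h2
        · exact absurd h2 hD'
        · exact h2
      have hterm : ∀ j (j' : ι'), (c' j' : ℚ) * wgt j' j = 0 := by
        intro j j'
        exact (Finset.sum_eq_zero_iff_of_nonneg (fun j'' _ =>
          mul_nonneg (Nat.cast_nonneg _) (hwgt_nonneg j'' j))).mp (hdzero j) j' (Finset.mem_univ j')
      rintro (z | pq)
      · have h1 := hterm z.1 (Sum.inl z)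
        dsimp [wgt] at h1
        rw [if_pos rfl, mul_one] at h1
        exact_mod_cast h1
      · have hppq : pq.2.1 ≠ pq.1.1 := by
          intro hEq
          have h2 := pq.1.2
          have h3 := pq.2.2
          rw [hEq] at h3
          linarith
        have h1 := hterm pq.1.1 (Sum.inr pq)
        dsimp [wgt] at h1
        rw [if_pos rfl, if_neg hppq, add_zero] at h1
        have hq := pq.2.2
        rcases mul_eq_zero.mp h1 with h2 | h2
        · exact_mod_cast h2
        · exfalso; linarith
    obtain ⟨ω', hω'⟩ := IH ι' v' key
    let s : ι → ℚ := fun j => ∑ i, ω' i * v j i.castSucc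
    have hsZ : ∀ z : ιZ, 0 < s z.1 := fun z => hω' (Sum.inl z)
    have hsPM : ∀ (p : ιP) (q : ιM),
        0 < v p.1 L * s q.1 + (- v q.1 L) * s p.1 := by
      intro p q
      have h0 := hω' (Sum.inr (p, q))
      have heq : ∑ i, ω' i * v' (Sum.inr (p,q)) i
          = v p.1 L * s q.1 + (- v q.1 L) * s p.1 := by
        dsimp only [v', V, Sum.elim_inr, s]
        rw [Finset.mul_sum, Finset.mul_sum, ← Finset.sum_add_distrib]
        exact Finset.sum_congr rfl fun i _ => by ring
      rwa [heq] at h0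
    let S : Finset ℚ := Finset.univ.image (fun p : ιP => -s p.1 / v p.1 L)
    let T : Finset ℚ := Finset.univ.image (fun q : ιM => -s q.1 / v q.1 L)
    have hST : ∀ a ∈ S, ∀ b ∈ T, a < b := by
      intro a ha b hb
      obtain ⟨p, -, rfl⟩ := Finset.mem_image.mp ha
      obtain ⟨q, -, rfl⟩ := Finset.mem_image.mp hb
      have hp := p.2
      have hq := q.2
      have hkey := hsPM p q
      rw [lt_div_iff_of_neg hq, div_mul_eq_mul_div, lt_div_iff₀ hp]
      nlinarith
    obtain ⟨t, htS, htT⟩ := exists_between_finsets S T hST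
    refine ⟨(Fin.snoc ω' t : Fin (N+1) → ℚ), fun j => ?_⟩
    have hsum : ∑ x, (Fin.snoc ω' t : Fin (N+1) → ℚ) x * v j x = s j + t * v j L := by
      rw [Fin.sum_univ_castSucc]
      simp only [Fin.snoc_castSucc, Fin.snoc_last]
      rfl
    rw [hsum]
    rcases lt_trichotomy (v j L) 0 with hneg | hzero | hpos
    · have hmem : -s j / v j L ∈ T := Finset.mem_image.mpr ⟨⟨j, hneg⟩, Finset.mem_univ _, rfl⟩
      have ht := htT _ hmem
      have h2 := (lt_div_iff_of_neg hneg).mp ht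
      linarith
    · rw [hzero]
      have := hsZ ⟨j, hzero⟩
      simpa using this
    · have hmem : -s j / v j L ∈ S := Finset.mem_image.mpr ⟨⟨j, hpos⟩, Finset.mem_univ _, rfl⟩
      have ht := htS _ hmem
      have h2 := (div_lt_iff₀ hpos).mp ht
      linarith



open MvPolynomial

variable {k : Type*} [Field k] {n : ℕ}

/-- `α` is the exponent of the `≺`-leading term of `f`. -/
def IsLeadingExp (mo : MonomialOrder (Fin (n + 1))) (f : MvPolynomial (Fin (n + 1)) k)
    (α : Fin (n + 1) →₀ ℕ) : Prop :=
  coeff α f ≠ 0 ∧ ∀ β : Fin (n + 1) →₀ ℕ, coeff β f ≠ 0 → mo.toSyn β ≤ mo.toSyn α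

/-- The `ω`-weight of an exponent vector. -/
def wt (ω : Fin (n + 1) → ℕ) (α : Fin (n + 1) →₀ ℕ) : ℕ := ∑ i, ω i * α i

/-- The `ω`-initial form of `f`: the sum of the terms of `f` of maximal `ω`-weight. -/
noncomputable def inForm (ω : Fin (n + 1) → ℕ) (f : MvPolynomial (Fin (n + 1)) k) :
    MvPolynomial (Fin (n + 1)) k :=
  ∑ α ∈ f.support.filter (fun α => wt ω α = f.support.sup (wt ω)),
    monomial α (coeff α f)

/-- The initial ideal `in_≺(I)`: the ideal generated by the `≺`-leading terms of the
elements of `I`. -/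
noncomputable def initialIdeal (mo : MonomialOrder (Fin (n + 1))) (I : Ideal (MvPolynomial (Fin (n + 1)) k)) :
    Ideal (MvPolynomial (Fin (n + 1)) k) :=
  Ideal.span {p | ∃ f ∈ I, ∃ α, IsLeadingExp mo f α ∧ p = monomial α (coeff α f)}

/-- The `ω`-initial ideal `in_ω(I)`: the ideal generated by the `ω`-initial forms of the
elements of `I`. -/
noncomputable def inFormIdeal (ω : Fin (n + 1) → ℕ) (I : Ideal (MvPolynomial (Fin (n + 1)) k)) :
    Ideal (MvPolynomial (Fin (n + 1)) k) :=
  Ideal.span {p | ∃ f ∈ I, p = inForm ω f}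

noncomputable instance : GradedAlgebra (homogeneousSubmodule (Fin (n + 1)) k) :=
  MvPolynomial.gradedAlgebra


section Helpers

variable {k : Type*} [Field k] {n : ℕ}

lemma wt_add (ω : Fin (n + 1) → ℕ) (a b : Fin (n + 1) →₀ ℕ) :
    wt ω (a + b) = wt ω a + wt ω b := by
  simp [wt, Finsupp.add_apply, mul_add, Finset.sum_add_distrib]

/-- The part of `f` of `ω`-weight exactly `W`. -/
noncomputable def WPart (ω : Fin (n + 1) → ℕ) (W : ℕ) (f : MvPolynomial (Fin (n + 1)) k) :
    MvPolynomial (Fin (n + 1)) k :=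
  ∑ α ∈ f.support.filter (fun α => wt ω α = W), monomial α (coeff α f)

lemma coeff_WPart (ω : Fin (n + 1) → ℕ) (W : ℕ) (f : MvPolynomial (Fin (n + 1)) k)
    (γ : Fin (n + 1) →₀ ℕ) :
    coeff γ (WPart ω W f) = if wt ω γ = W then coeff γ f else 0 := by
  classical
  rw [WPart, coeff_sum]
  simp only [coeff_monomial]
  rw [Finset.sum_ite_eq' (f.support.filter fun α => wt ω α = W) γ (fun α => coeff α f)]
  by_cases h1 : wt ω γ = W
  · by_cases h2 : γ ∈ f.support
    · simp [Finset.mem_filter, h1, h2]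
    · simp [Finset.mem_filter, h1, h2, MvPolynomial.notMem_support_iff.mp h2]
  · simp [Finset.mem_filter, h1]

lemma inForm_eq_WPart (ω : Fin (n + 1) → ℕ) (f : MvPolynomial (Fin (n + 1)) k) :
    inForm ω f = WPart ω (f.support.sup (wt ω)) f := rfl

lemma coeff_inForm (ω : Fin (n + 1) → ℕ) (f : MvPolynomial (Fin (n + 1)) k)
    (γ : Fin (n + 1) →₀ ℕ) :
    coeff γ (inForm ω f) = if wt ω γ = f.support.sup (wt ω) then coeff γ f else 0 := by
  rw [inForm_eq_WPart, coeff_WPart]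

lemma exists_lead (mo : MonomialOrder (Fin (n + 1))) (f : MvPolynomial (Fin (n + 1)) k)
    (hf : f ≠ 0) :
    ∃ α, IsLeadingExp mo f α ∧ f.support.sup mo.toSyn = mo.toSyn α := by
  obtain ⟨α, hα, hsup⟩ :=
    Finset.exists_mem_eq_sup f.support (MvPolynomial.support_nonempty.mpr hf) mo.toSyn
  refine ⟨α, ⟨MvPolynomial.mem_support_iff.mp hα, fun β hβ => ?_⟩, hsup⟩
  rw [← hsup]
  exact Finset.le_sup (MvPolynomial.mem_support_iff.mpr hβ)

lemma lead_unique {mo : MonomialOrder (Fin (n + 1))} {f : MvPolynomial (Fin (n + 1)) k}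
    {α β : Fin (n + 1) →₀ ℕ} (h1 : IsLeadingExp mo f α) (h2 : IsLeadingExp mo f β) : α = β :=
  mo.toSyn.injective (le_antisymm (h2.2 α h1.1) (h1.2 β h2.1))

lemma monomial_eq_monomial {α β : Fin (n + 1) →₀ ℕ} {b c : k} (hb : b ≠ 0)
    (h : (monomial α b : MvPolynomial (Fin (n + 1)) k) = monomial β c) : α = β ∧ b = c := by
  classical
  have h1 := congrArg (coeff α) h
  rw [coeff_monomial, coeff_monomial, if_pos rfl] at h1
  by_cases h2 : β = α
  · subst h2
    exact ⟨rfl, by rwa [if_pos rfl] at h1⟩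
  · rw [if_neg h2] at h1
    exact absurd h1 hb

/-- membership in a monomial ideal implies divisibility by a generator -/
lemma mem_monomial_span {S : Set (MvPolynomial (Fin (n + 1)) k)}
    (hS : ∀ p ∈ S, ∃ (β : Fin (n + 1) →₀ ℕ) (c : k), p = monomial β c)
    {α : Fin (n + 1) →₀ ℕ} {c : k} (hc : c ≠ 0) (h : monomial α c ∈ Ideal.span S) :
    ∃ (β : Fin (n + 1) →₀ ℕ) (b : k), b ≠ 0 ∧ monomial β b ∈ S ∧ β ≤ α := by
  classical
  obtain ⟨cc, hsupp, hsum⟩ := Submodule.mem_span_set.mp h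
  have hco : coeff α (cc.sum fun mi r => r • mi) ≠ 0 := by
    rw [hsum]
    simpa [coeff_monomial] using hc
  rw [Finsupp.sum] at hco
  rw [coeff_sum] at hco
  obtain ⟨p, hp, hne⟩ := Finset.exists_ne_zero_of_sum_ne_zero hco
  obtain ⟨β, b, rfl⟩ := hS p (hsupp hp)
  rw [smul_eq_mul, coeff_mul_monomial'] at hne
  by_cases hβ : β ≤ α
  · rw [if_pos hβ] at hne
    exact ⟨β, b, right_ne_zero_of_mul hne, hsupp hp, hβ⟩
  · rw [if_neg hβ] at hne
    exact absurd rfl hne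

lemma weight_facts {ω : Fin (n + 1) → ℕ} {g : MvPolynomial (Fin (n + 1)) k}
    {α : Fin (n + 1) →₀ ℕ} (hα : coeff α g ≠ 0)
    (hfm : inForm ω g = monomial α (coeff α g)) :
    ∀ δ ∈ g.support, δ ≠ α → wt ω δ < wt ω α := by
  classical
  intro δ hδ hne
  have hsup : wt ω α = g.support.sup (wt ω) := by
    have h1 := congrArg (coeff α) hfm
    rw [coeff_inForm, coeff_monomial, if_pos rfl] at h1
    by_contra hcon
    rw [if_neg hcon] at h1
    exact hα h1.symm
  have h2 := congrArg (coeff δ) hfm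
  rw [coeff_inForm, coeff_monomial, if_neg (show ¬(α = δ) from fun h => hne h.symm)] at h2
  have h3 : wt ω δ ≠ g.support.sup (wt ω) := by
    intro hcon
    rw [if_pos hcon] at h2
    exact MvPolynomial.mem_support_iff.mp hδ h2
  rw [hsup]
  exact lt_of_le_of_ne (Finset.le_sup hδ) h3

end Helpers
lemma part1 {k : Type*} [Field k] {n : ℕ} (mo : MonomialOrder (Fin (n + 1)))
    (G : Finset (MvPolynomial (Fin (n + 1)) k)) (hG0 : ∀ g ∈ G, g ≠ 0) :
    ∃ ω : Fin (n + 1) → ℕ, ∀ g ∈ G, ∃ α, IsLeadingExp mo g α ∧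
      inForm ω g = monomial α (coeff α g) := by
  classical
  have hlead : ∀ g ∈ G, ∃ α, IsLeadingExp mo g α := fun g hg =>
    (exists_lead mo g (hG0 g hg)).imp fun α h => h.1
  choose! lexp hlexp using hlead
  set pairs : Finset ((Fin (n+1) →₀ ℕ) × (Fin (n+1) →₀ ℕ)) :=
    G.attach.biUnion (fun g => (g.1.support.erase (lexp g.1)).image (fun b => (lexp g.1, b)))
    with hpairs
  have hpair_lt : ∀ ab ∈ pairs, mo.toSyn ab.2 < mo.toSyn ab.1 := by
    intro ab hab
    rw [hpairs] at hab
    obtain ⟨g, hg, hab2⟩ := Finset.mem_biUnion.mp hab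
    obtain ⟨b, hb, rfl⟩ := Finset.mem_image.mp hab2
    have hbmem := Finset.mem_of_mem_erase hb
    have hbne := Finset.ne_of_mem_erase hb
    have hle := (hlexp g.1 g.2).2 b (MvPolynomial.mem_support_iff.mp hbmem)
    exact lt_of_le_of_ne hle (fun h => hbne (mo.toSyn.injective h))
  let ι : Type := (↥pairs) ⊕ (Fin (n+1))
  let v : ι → Fin (n+1) → ℚ := Sum.elim
    (fun ab => fun i => (ab.1.1 i : ℚ) - (ab.1.2 i : ℚ))
    (fun i0 => fun i => if i = i0 then 1 else 0)
  have hGord : ∀ c : ι → ℕ, (∀ i, ∑ j, (c j : ℚ) * v j i ≤ 0) → ∀ j, c j = 0 := by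
    intro c hc
    have hc' : ∀ i, (∑ ab : ↥pairs, (c (Sum.inl ab) : ℚ) * ((ab.1.1 i : ℚ) - (ab.1.2 i : ℚ)))
        + (∑ i0, (c (Sum.inr i0) : ℚ) * (if i = i0 then 1 else 0)) ≤ 0 := by
      intro i
      have h0 := hc i
      rwa [Fintype.sum_sum_type] at h0
    set A1 : (Fin (n+1) →₀ ℕ) := ∑ ab : ↥pairs, c (Sum.inl ab) • ab.1.1 with hA1
    set A2 : (Fin (n+1) →₀ ℕ) := ∑ i0 : Fin (n+1), c (Sum.inr i0) • Finsupp.single i0 1 with hA2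
    set B : (Fin (n+1) →₀ ℕ) := ∑ ab : ↥pairs, c (Sum.inl ab) • ab.1.2 with hB
    have e2 : ∀ i, A1 i = ∑ ab : ↥pairs, c (Sum.inl ab) * ab.1.1 i := by
      intro i
      rw [hA1, Finset.sum_apply']
      exact Finset.sum_congr rfl fun ab _ => by rw [Finsupp.smul_apply, smul_eq_mul]
    have e4 : ∀ i, B i = ∑ ab : ↥pairs, c (Sum.inl ab) * ab.1.2 i := by
      intro i
      rw [hB, Finset.sum_apply']
      exact Finset.sum_congr rfl fun ab _ => by rw [Finsupp.smul_apply, smul_eq_mul]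
    have e3 : ∀ i, A2 i = c (Sum.inr i) := by
      intro i
      rw [hA2, Finset.sum_apply']
      rw [Finset.sum_eq_single i]
      · rw [Finsupp.smul_apply, Finsupp.single_eq_same, smul_eq_mul, mul_one]
      · intro i0 _ hne
        rw [Finsupp.smul_apply, Finsupp.single_eq_of_ne' hne, smul_eq_mul, mul_zero]
      · intro h
        exact absurd (Finset.mem_univ i) h
    have hABle : ∀ i, (A1 + A2) i ≤ B i := by
      intro i
      have h0 := hc' i
      have h1 : (∑ i0, (c (Sum.inr i0) : ℚ) * (if i = i0 then 1 else 0)) = c (Sum.inr i) := by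
        simp only [mul_ite, mul_one, mul_zero]
        rw [Finset.sum_ite_eq]
        simp
      have h2 : (∑ ab : ↥pairs, (c (Sum.inl ab) : ℚ) * ((ab.1.1 i : ℚ) - (ab.1.2 i : ℚ)))
          = (A1 i : ℚ) - (B i : ℚ) := by
        rw [e2 i, e4 i]
        push_cast
        rw [← Finset.sum_sub_distrib]
        exact Finset.sum_congr rfl fun ab _ => by ring
      rw [h1, h2] at h0
      have h3 : ((A1 + A2) i : ℚ) ≤ (B i : ℚ) := by
        rw [Finsupp.add_apply]
        push_cast
        rw [e3 i]
        push_cast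
        linarith
      exact_mod_cast h3
    have hABle' : mo.toSyn (A1 + A2) ≤ mo.toSyn B := mo.toSyn_monotone (Finsupp.le_def.mpr hABle)
    have hinl : ∀ ab : ↥pairs, c (Sum.inl ab) = 0 := by
      by_contra hcon
      push_neg at hcon
      obtain ⟨ab0, hab0⟩ := hcon
      have hstrict : mo.toSyn B < mo.toSyn A1 := by
        rw [hA1, hB, map_sum, map_sum]
        apply Finset.sum_lt_sum
        · intro ab _
          rw [map_nsmul, map_nsmul]
          exact nsmul_le_nsmul_right (le_of_lt (hpair_lt ab.1 ab.2)) _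
        · refine ⟨ab0, Finset.mem_univ _, ?_⟩
          rw [map_nsmul, map_nsmul]
          exact nsmul_lt_nsmul_right hab0 (hpair_lt ab0.1 ab0.2)
      have hA1A : mo.toSyn A1 ≤ mo.toSyn (A1 + A2) := mo.toSyn_monotone le_self_add
      exact absurd hABle' (not_le.mpr (lt_of_lt_of_le hstrict hA1A))
    have hinr : ∀ i0, c (Sum.inr i0) = 0 := by
      intro i0
      have h1 := hABle i0
      have hB0 : B i0 = 0 := by
        rw [e4 i0]
        exact Finset.sum_eq_zero fun ab _ => by rw [hinl ab, zero_mul]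
      rw [Finsupp.add_apply, e3 i0, hB0] at h1
      omega
    rintro (ab | i0)
    · exact hinl ab
    · exact hinr i0
  obtain ⟨ω₀, hω₀⟩ := gordan (n+1) ι v hGord
  have hω₀pos : ∀ i, 0 < ω₀ i := by
    intro i
    have h1 : 0 < ∑ x, ω₀ x * (if x = i then 1 else 0) := hω₀ (Sum.inr i)
    simp only [mul_ite, mul_one, mul_zero] at h1
    rwa [Finset.sum_ite_eq', if_pos (Finset.mem_univ i)] at h1
  obtain ⟨D, Ω, hD, hΩ⟩ := family_scale ω₀ (fun i => (hω₀pos i).le)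
  refine ⟨Ω, fun g hg => ?_⟩
  refine ⟨lexp g, hlexp g hg, ?_⟩
  have hsuppL : lexp g ∈ g.support := MvPolynomial.mem_support_iff.mpr (hlexp g hg).1
  have hstrict : ∀ β ∈ g.support, β ≠ lexp g → wt Ω β < wt Ω (lexp g) := by
    intro β hβ hne
    have hmem : ((lexp g, β)) ∈ pairs := by
      rw [hpairs]
      exact Finset.mem_biUnion.mpr ⟨⟨g, hg⟩, Finset.mem_attach _ _,
        Finset.mem_image.mpr ⟨β, Finset.mem_erase.mpr ⟨hne, hβ⟩, rfl⟩⟩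
    have h1 : 0 < ∑ i, ω₀ i * (((lexp g) i : ℚ) - (β i : ℚ)) :=
      hω₀ (Sum.inl ⟨(lexp g, β), hmem⟩)
    have hcast : (wt Ω (lexp g) : ℚ) - (wt Ω β : ℚ)
        = D * ∑ i, ω₀ i * (((lexp g) i : ℚ) - (β i : ℚ)) := by
      rw [wt, wt]
      push_cast
      rw [Finset.mul_sum, ← Finset.sum_sub_distrib]
      exact Finset.sum_congr rfl fun i _ => by rw [hΩ i]; ring
    have hpos : 0 < (D:ℚ) * ∑ i, ω₀ i * (((lexp g) i : ℚ) - (β i : ℚ)) :=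
      mul_pos (by exact_mod_cast hD) h1
    rw [← hcast] at hpos
    have h2 : (wt Ω β : ℚ) < (wt Ω (lexp g) : ℚ) := by linarith
    exact_mod_cast h2
  have hsup : g.support.sup (wt Ω) = wt Ω (lexp g) := by
    apply le_antisymm
    · apply Finset.sup_le
      intro β hβ
      rcases eq_or_ne β (lexp g) with rfl | hne
      · exact le_refl _
      · exact (hstrict β hβ hne).le
    · exact Finset.le_sup hsuppL
  have hfilter : g.support.filter (fun α => wt Ω α = g.support.sup (wt Ω)) = {lexp g} := by
    ext β
    simp only [Finset.mem_filter, Finset.mem_singleton, hsup]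
    constructor
    · rintro ⟨hβ, hwt⟩
      by_contra hne
      exact absurd hwt (ne_of_lt (hstrict β hβ hne))
    · rintro rfl
      exact ⟨hsuppL, rfl⟩
  rw [inForm_eq_WPart, WPart, hsup, ← hsup, hfilter, Finset.sum_singleton]

lemma part2 {k : Type*} [Field k] {n : ℕ} (mo : MonomialOrder (Fin (n + 1)))
    (I : Ideal (MvPolynomial (Fin (n + 1)) k))
    (G : Finset (MvPolynomial (Fin (n + 1)) k))
    (hGI : ∀ g ∈ G, g ∈ I)
    (hGB : initialIdeal mo I =
      Ideal.span {p | ∃ g ∈ G, ∃ α, IsLeadingExp mo g α ∧ p = monomial α (coeff α g)})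
    (ω : Fin (n + 1) → ℕ)
    (hω : ∀ g ∈ G, ∃ α, IsLeadingExp mo g α ∧ inForm ω g = monomial α (coeff α g)) :
    inFormIdeal ω I = initialIdeal mo I := by
  classical
  have main : ∀ (s : mo.syn) (f : MvPolynomial (Fin (n + 1)) k),
      f.support.sup mo.toSyn = s → f ∈ I → inForm ω f ∈ initialIdeal mo I := by
    intro s
    apply WellFoundedLT.induction s
    intro s IH f hDf hfI
    by_cases hf0 : f = 0
    · have h0 : inForm ω f = 0 := by
        subst hf0; simp [inForm]
      rw [h0]; exact zero_mem _
    -- the leading exponent of f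
    obtain ⟨α, hαlead, hαsup⟩ := exists_lead mo f hf0
    have hαc : coeff α f ≠ 0 := hαlead.1
    have hαsupp : α ∈ f.support := MvPolynomial.mem_support_iff.mpr hαc
    have hLT : monomial α (coeff α f) ∈ initialIdeal mo I :=
      Ideal.subset_span ⟨f, hfI, α, hαlead, rfl⟩
    have hLTG : monomial α (coeff α f) ∈
        Ideal.span {p | ∃ g ∈ G, ∃ β, IsLeadingExp mo g β ∧ p = monomial β (coeff β g)} :=
      hGB ▸ hLT
    obtain ⟨β, b, hb0, hbmem, hβα⟩ := mem_monomial_span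
      (fun p hp => by
        obtain ⟨g, hg, β, hlead, hpeq⟩ := hp
        exact ⟨β, coeff β g, hpeq⟩) hαc hLTG
    obtain ⟨g, hgG, β, hglead, hpeq⟩ := hbmem
    obtain ⟨hβeq, hbeq⟩ := monomial_eq_monomial hb0 hpeq
    subst hβeq
    have hβc : coeff β g ≠ 0 := hglead.1
    -- the ω-initial form of g is its leading term
    obtain ⟨βg', hg'lead, hform⟩ := hω g hgG
    have hββ : βg' = β := lead_unique hg'lead hglead
    rw [hββ] at hform
    have hwg : ∀ δ ∈ g.support, δ ≠ β → wt ω δ < wt ω β := weight_facts hβc hform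
    -- the reduction step
    set q : MvPolynomial (Fin (n + 1)) k := monomial (α - β) (coeff α f / coeff β g) * g
      with hq
    set f' : MvPolynomial (Fin (n + 1)) k := f - q with hf'
    have hf'I : f' ∈ I := I.sub_mem hfI (I.mul_mem_left _ (hGI g hgG))
    have hβadd : β + (α - β) = α := add_tsub_cancel_of_le hβα
    have hqco : ∀ γ, coeff γ q =
        if α - β ≤ γ then (coeff α f / coeff β g) * coeff (γ - (α - β)) g else 0 :=
      fun γ => coeff_monomial_mul' γ (α - β) _ g
    have hqα : coeff α q = coeff α f := by
      rw [hqco, if_pos tsub_le_self, tsub_tsub_cancel_of_le hβα, div_mul_cancel₀ _ hβc]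
    -- support facts for q
    have hsuppq : ∀ γ, coeff γ q ≠ 0 → γ ≠ α →
        mo.toSyn γ < mo.toSyn α ∧ wt ω γ < wt ω α := by
      intro γ hγ hγα
      rw [hqco] at hγ
      by_cases hle : α - β ≤ γ
      swap
      · rw [if_neg hle] at hγ; exact absurd rfl hγ
      rw [if_pos hle] at hγ
      have hδc : coeff (γ - (α - β)) g ≠ 0 := right_ne_zero_of_mul hγ
      have hδ : (γ - (α - β)) ∈ g.support := MvPolynomial.mem_support_iff.mpr hδc
      have hγeq : γ = (γ - (α - β)) + (α - β) := (tsub_add_cancel_of_le hle).symm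
      have hδne : γ - (α - β) ≠ β := by
        intro hEq
        rw [hEq] at hγeq
        rw [hβadd] at hγeq
        exact hγα hγeq
      constructor
      · have h1 : mo.toSyn (γ - (α - β)) < mo.toSyn β :=
          lt_of_le_of_ne (hglead.2 _ hδc) (fun h => hδne (mo.toSyn.injective h))
        calc mo.toSyn γ = mo.toSyn (γ - (α - β)) + mo.toSyn (α - β) := by
              rw [← map_add, ← hγeq]
          _ < mo.toSyn β + mo.toSyn (α - β) := by
              exact add_lt_add_of_lt_of_le h1 le_rfl
          _ = mo.toSyn α := by rw [← map_add, hβadd]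
      · have h1 : wt ω (γ - (α - β)) < wt ω β := hwg _ hδ hδne
        calc wt ω γ = wt ω (γ - (α - β)) + wt ω (α - β) := by
              rw [← wt_add, ← hγeq]
          _ < wt ω β + wt ω (α - β) := by omega
          _ = wt ω α := by rw [← wt_add, hβadd]
    have hf'α : coeff α f' = 0 := by
      rw [hf', MvPolynomial.coeff_sub, hqα, sub_self]
    have hf'co : ∀ γ, coeff γ f' ≠ 0 → coeff γ f ≠ 0 ∨ coeff γ q ≠ 0 := by
      intro γ hγ
      by_contra hcon
      push_neg at hcon
      rw [hf', MvPolynomial.coeff_sub, hcon.1, hcon.2, sub_self] at hγ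
      exact hγ rfl
    -- strict degree bound for f'
    have hsuppf' : ∀ γ ∈ f'.support, mo.toSyn γ < mo.toSyn α := by
      intro γ hγ
      have hγc := MvPolynomial.mem_support_iff.mp hγ
      have hγα : γ ≠ α := by
        intro hEq; rw [hEq] at hγc; exact hγc hf'α
      rcases hf'co γ hγc with h1 | h1
      · refine lt_of_le_of_ne ?_ (fun h => hγα (mo.toSyn.injective h))
        rw [← hαsup]
        exact Finset.le_sup (MvPolynomial.mem_support_iff.mpr h1)
      · exact (hsuppq γ h1 hγα).1
    have hf'deg : ∀ (hne : f' ≠ 0), f'.support.sup mo.toSyn < s := by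
      intro hne
      rw [← hDf, hαsup]
      have hbot : (⊥ : mo.syn) < mo.toSyn α := by
        obtain ⟨γ1, hγ1, -⟩ :=
          Finset.exists_mem_eq_sup f'.support (MvPolynomial.support_nonempty.mpr hne) mo.toSyn
        exact lt_of_le_of_lt bot_le (hsuppf' γ1 hγ1)
      exact (Finset.sup_lt_iff hbot).mpr hsuppf'
    -- weights
    set W : ℕ := f.support.sup (wt ω) with hW
    have hWα : wt ω α ≤ W := Finset.le_sup hαsupp
    have hbound : ∀ γ, coeff γ f' ≠ 0 → wt ω γ ≤ max (wt ω α) W := by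
      intro γ hγ
      rcases hf'co γ hγ with h1 | h1
      · exact le_max_of_le_right (Finset.le_sup (MvPolynomial.mem_support_iff.mpr h1))
      · rcases eq_or_ne γ α with rfl | hγα
        · exact le_max_left _ _
        · exact le_max_of_le_left (hsuppq γ h1 hγα).2.le
    rcases lt_or_eq_of_le hWα with hlt | hWeq
    -- Case (a) : the leading term of f does not have maximal weight
    · have hcoeq : ∀ γ, wt ω α < wt ω γ → coeff γ f' = coeff γ f := by
        intro γ hγ
        have hq0 : coeff γ q = 0 := by
          by_contra hq0
          have hγα : γ ≠ α := by
            intro hEq; rw [hEq] at hγ; exact lt_irrefl _ hγ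
          exact absurd (hsuppq γ hq0 hγα).2 (not_lt.mpr hγ.le)
        rw [hf', MvPolynomial.coeff_sub, hq0, sub_zero]
      obtain ⟨γ0, hγ0, hγ0sup⟩ :=
        Finset.exists_mem_eq_sup f.support (MvPolynomial.support_nonempty.mpr hf0) (wt ω)
      have hγ0W : wt ω γ0 = W := hγ0sup.symm
      have hγ0f' : coeff γ0 f' ≠ 0 := by
        rw [hcoeq γ0 (by omega)]
        exact MvPolynomial.mem_support_iff.mp hγ0
      have hf'ne : f' ≠ 0 := fun h => hγ0f' (by rw [h]; simp)
      have hsupf' : f'.support.sup (wt ω) = W := by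
        apply le_antisymm
        · apply Finset.sup_le
          intro γ hγ
          have := hbound γ (MvPolynomial.mem_support_iff.mp hγ)
          omega
        · rw [← hγ0W]
          exact Finset.le_sup (MvPolynomial.mem_support_iff.mpr hγ0f')
      have hform_eq : inForm ω f' = inForm ω f := by
        rw [inForm_eq_WPart, inForm_eq_WPart, hsupf', ← hW]
        apply MvPolynomial.ext
        intro γ
        rw [coeff_WPart, coeff_WPart]
        by_cases hwt : wt ω γ = W
        · rw [if_pos hwt, if_pos hwt, hcoeq γ (by omega)]
        · rw [if_neg hwt, if_neg hwt]
      rw [← hform_eq]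
      exact IH _ (hf'deg hf'ne) f' rfl hf'I
    -- Case (b) : the leading term of f has maximal weight
    · have hcase : ∀ γ, γ ≠ α → wt ω γ = W → coeff γ q = 0 := by
        intro γ hγα hwt
        by_contra hq0
        have := (hsuppq γ hq0 hγα).2
        omega
      have hdecomp : inForm ω f = WPart ω W f' + monomial α (coeff α f) := by
        rw [inForm_eq_WPart, ← hW]
        apply MvPolynomial.ext
        intro γ
        rw [MvPolynomial.coeff_add, coeff_WPart, coeff_WPart, coeff_monomial]
        rcases eq_or_ne γ α with rfl | hγα
        · rw [if_pos rfl, if_pos hWeq, if_pos hWeq, hf'α, zero_add]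
        · rw [if_neg (show ¬(α = γ) from fun h => hγα h.symm), add_zero]
          by_cases hwt : wt ω γ = W
          · rw [if_pos hwt, if_pos hwt, hf', MvPolynomial.coeff_sub,
              hcase γ hγα hwt, sub_zero]
          · rw [if_neg hwt, if_neg hwt]
      rw [hdecomp]
      refine add_mem ?_ hLT
      by_cases hf'0 : f' = 0
      · have : WPart ω W f' = 0 := by
          rw [hf'0]; simp [WPart]
        rw [this]; exact zero_mem _
      · have hboundW : ∀ γ ∈ f'.support, wt ω γ ≤ W := by
          intro γ hγ
          have := hbound γ (MvPolynomial.mem_support_iff.mp hγ)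
          omega
        rcases eq_or_lt_of_le (Finset.sup_le hboundW : f'.support.sup (wt ω) ≤ W) with hW2 | hW2
        · have heq2 : WPart ω W f' = inForm ω f' := by
            rw [inForm_eq_WPart, hW2]
          rw [heq2]
          exact IH _ (hf'deg hf'0) f' rfl hf'I
        · have : WPart ω W f' = 0 := by
            rw [WPart]
            rw [Finset.filter_false_of_mem, Finset.sum_empty]
            intro γ hγ
            have h1 : wt ω γ ≤ f'.support.sup (wt ω) := Finset.le_sup hγ
            omega
          rw [this]; exact zero_mem _
  -- conclusion
  apply le_antisymm
  · rw [inFormIdeal]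
    apply Ideal.span_le.mpr
    rintro p ⟨f, hfI, rfl⟩
    exact main _ f rfl hfI
  · rw [hGB]
    apply Ideal.span_le.mpr
    rintro p ⟨g, hgG, β, hlead, rfl⟩
    obtain ⟨β', hlead', hform⟩ := hω g hgG
    have hββ : β' = β := lead_unique hlead' hlead
    rw [hββ] at hform
    rw [← hform]
    exact Ideal.subset_span ⟨g, hGI g hgG, rfl⟩

/-- Sturmfels, Proposition 1.11: for a homogeneous ideal `I` with a finite Gröbner basis
`G` with respect to a monomial order `≺`, there exists a nonnegative integral weight
vector `ω` such that `in_ω(g) = in_≺(g)` for every `g ∈ G`; and for any such `ω`,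
`in_ω(I) = in_≺(I)` (i.e. the flat limit under the 1-PS `λ(t).x_i = t^{-ω_i} x_i`
of `λ(t).I` as `t → 0` is the initial ideal `in_≺(I)`). -/
theorem stmt18 (mo : MonomialOrder (Fin (n + 1)))
    (I : Ideal (MvPolynomial (Fin (n + 1)) k))
    (hI : I.IsHomogeneous (homogeneousSubmodule (Fin (n + 1)) k))
    (G : Finset (MvPolynomial (Fin (n + 1)) k))
    (hGI : ∀ g ∈ G, g ∈ I) (hG0 : ∀ g ∈ G, g ≠ 0)
    (hGB : initialIdeal mo I =
      Ideal.span {p | ∃ g ∈ G, ∃ α, IsLeadingExp mo g α ∧ p = monomial α (coeff α g)}) :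
    (∃ ω : Fin (n + 1) → ℕ, ∀ g ∈ G, ∃ α, IsLeadingExp mo g α ∧
      inForm ω g = monomial α (coeff α g)) ∧
    ∀ ω : Fin (n + 1) → ℕ, (∀ g ∈ G, ∃ α, IsLeadingExp mo g α ∧
        inForm ω g = monomial α (coeff α g)) →
      inFormIdeal ω I = initialIdeal mo I :=
  ⟨part1 mo G hG0, fun ω hω => part2 mo I G hGI hGB ω hω⟩
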